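/- For n = 5, the extended quotient 𝕋̂⁵/S_5 (coordinate-permutation action) is homeomorphic to the disjoint union 𝕋 ⊔ 𝕋² ⊔ 𝕋² ⊔ (𝕋 × Sym²𝕋) ⊔ (𝕋 × Sym²𝕋) ⊔ (𝕋 × Sym³𝕋) ⊔ Sym⁵𝕋, one component for each of the seven partitions of 5. -/

import Mathlib

/-- The coordinate-permutation action of `S_r` on the torus `𝕋^r`. -/
instance circlePermAction (r : ℕ) : MulAction (Equiv.Perm (Fin r)) (Fin r → Circle) where
  smul σ z := fun i => z (σ⁻¹ i)
  one_smul z := funext fun i => by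
    show z ((1 : Equiv.Perm (Fin r))⁻¹ i) = z i
    simp
  mul_smul σ τ z := funext fun i => by
    show z ((σ * τ)⁻¹ i) = z (τ⁻¹ (σ⁻¹ i))
    rw [mul_inv_rev, Equiv.Perm.mul_apply]

/-- The symmetric product `Sym^r 𝕋 = 𝕋^r / S_r`. -/
abbrev SymTorus (r : ℕ) : Type :=
  Quotient (MulAction.orbitRel (Equiv.Perm (Fin r)) (Fin r → Circle))

instance (r : ℕ) : TopologicalSpace (Equiv.Perm (Fin r)) := ⊥
instance (r : ℕ) : DiscreteTopology (Equiv.Perm (Fin r)) := ⟨rfl⟩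

/-- The extended space `{(γ, z) ∈ S_n × 𝕋ⁿ : γ • z = z}`. -/
abbrev ExtTorus (n : ℕ) : Type :=
  {p : Equiv.Perm (Fin n) × (Fin n → Circle) // p.1 • p.2 = p.2}

/-- The action `g • (γ, z) = (gγg⁻¹, g • z)` of `S_n` on the extended space. -/
instance extTorusAction (n : ℕ) : MulAction (Equiv.Perm (Fin n)) (ExtTorus n) where
  smul g p := ⟨(g * p.1.1 * g⁻¹, g • p.1.2), by
    show (g * p.1.1 * g⁻¹) • (g • p.1.2) = g • p.1.2
    rw [mul_smul, mul_smul, inv_smul_smul, p.2]⟩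
  one_smul p := Subtype.ext (by
    show ((1 : Equiv.Perm (Fin n)) * p.1.1 * (1 : Equiv.Perm (Fin n))⁻¹,
      (1 : Equiv.Perm (Fin n)) • p.1.2) = p.1
    simp)
  mul_smul g h p := Subtype.ext (by
    show ((g * h) * p.1.1 * (g * h)⁻¹, (g * h) • p.1.2)
        = (g * (h * p.1.1 * h⁻¹) * g⁻¹, g • h • p.1.2)
    rw [Prod.mk.injEq]
    exact ⟨by group, mul_smul g h p.1.2⟩)

/-- The extended quotient `𝕋̂ⁿ/S_n`. -/
abbrev ExtQuotTorus (n : ℕ) : Type :=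
  Quotient (MulAction.orbitRel (Equiv.Perm (Fin n)) (ExtTorus n))

set_option maxRecDepth 10000
set_option maxHeartbeats 2000000

open Equiv MulAction Topology

private abbrev G5 := Equiv.Perm (Fin 5)
private def p2 : G5 := Equiv.swap 0 1
private def p22 : G5 := Equiv.swap 0 1 * Equiv.swap 2 3
private def p3 : G5 := Equiv.swap 0 1 * Equiv.swap 1 2
private def p32 : G5 := Equiv.swap 0 1 * Equiv.swap 1 2 * Equiv.swap 3 4
private def p4 : G5 := Equiv.swap 0 1 * Equiv.swap 1 2 * Equiv.swap 2 3
private def p5 : G5 := finRotate 5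

private def w5v (c : Circle) : Fin 5 → Circle := fun _ => c
private def w4v (c d : Circle) : Fin 5 → Circle := ![c, c, c, c, d]
private def w32v (c d : Circle) : Fin 5 → Circle := ![c, c, c, d, d]
private def w3v (c : Circle) (v : Fin 2 → Circle) : Fin 5 → Circle := ![c, c, c, v 0, v 1]
private def w22v (c : Circle) (v : Fin 2 → Circle) : Fin 5 → Circle := ![v 0, v 0, v 1, v 1, c]
private def w2v (c : Circle) (v : Fin 3 → Circle) : Fin 5 → Circle := ![c, c, v 0, v 1, v 2]

private def x5 (c : Circle) : ExtTorus 5 := ⟨(p5, w5v c), by funext i; fin_cases i <;> rfl⟩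
private def x4 (c d : Circle) : ExtTorus 5 := ⟨(p4, w4v c d), by funext i; fin_cases i <;> rfl⟩
private def x32 (c d : Circle) : ExtTorus 5 := ⟨(p32, w32v c d), by funext i; fin_cases i <;> rfl⟩
private def x3 (c : Circle) (v : Fin 2 → Circle) : ExtTorus 5 :=
  ⟨(p3, w3v c v), by funext i; fin_cases i <;> rfl⟩
private def x22 (c : Circle) (v : Fin 2 → Circle) : ExtTorus 5 :=
  ⟨(p22, w22v c v), by funext i; fin_cases i <;> rfl⟩
private def x2 (c : Circle) (v : Fin 3 → Circle) : ExtTorus 5 :=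
  ⟨(p2, w2v c v), by funext i; fin_cases i <;> rfl⟩
private def x1 (v : Fin 5 → Circle) : ExtTorus 5 := ⟨(1, v), one_smul _ v⟩

private lemma quot_eq_iff (x y : ExtTorus 5) :
    (Quotient.mk (MulAction.orbitRel G5 (ExtTorus 5)) x = Quotient.mk _ y) ↔ ∃ g : G5, g • y = x := by
  constructor
  · intro h
    exact MulAction.mem_orbit_iff.mp (MulAction.orbitRel_apply.mp (Quotient.exact h))
  · intro hg
    exact Quotient.sound (MulAction.orbitRel_apply.mpr (MulAction.mem_orbit_iff.mpr hg))

private lemma symquot_eq_iff {r : ℕ} (v w : Fin r → Circle) :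
    (Quotient.mk (MulAction.orbitRel (Perm (Fin r)) (Fin r → Circle)) v = Quotient.mk _ w)
      ↔ ∃ σ : Perm (Fin r), σ • w = v := by
  constructor
  · intro h
    exact MulAction.mem_orbit_iff.mp (MulAction.orbitRel_apply.mp (Quotient.exact h))
  · intro hg
    exact Quotient.sound (MulAction.orbitRel_apply.mpr (MulAction.mem_orbit_iff.mpr hg))

private lemma perm2_enum : ∀ σ : Equiv.Perm (Fin 2), σ = 1 ∨ σ = Equiv.swap 0 1 := by decide

private lemma perm3_enum : ∀ σ : Equiv.Perm (Fin 3),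
    σ = 1 ∨ σ = Equiv.swap 0 1 ∨ σ = Equiv.swap 0 2 ∨ σ = Equiv.swap 1 2 ∨
    σ = Equiv.swap 0 1 * Equiv.swap 1 2 ∨ σ = Equiv.swap 1 2 * Equiv.swap 0 1 := by decide

private lemma orbit_rel_of (g : G5) (x y : ExtTorus 5) (h1 : g * y.1.1 * g⁻¹ = x.1.1)
    (h2 : ∀ i, y.1.2 (g⁻¹ i) = x.1.2 i) :
    Quotient.mk (MulAction.orbitRel G5 (ExtTorus 5)) x = Quotient.mk _ y :=
  (quot_eq_iff x y).mpr ⟨g, Subtype.ext (Prod.ext h1 (funext h2))⟩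

private def mkQ (x : ExtTorus 5) : ExtQuotTorus 5 := Quotient.mk _ x

private def mk5f : Circle → ExtQuotTorus 5 := fun c => mkQ (x5 c)
private def mk4f : Circle × Circle → ExtQuotTorus 5 := fun p => mkQ (x4 p.1 p.2)
private def mk32f : Circle × Circle → ExtQuotTorus 5 := fun p => mkQ (x32 p.1 p.2)

private def mk3f : Circle × SymTorus 2 → ExtQuotTorus 5 := fun p =>
  Quotient.liftOn p.2 (fun v => mkQ (x3 p.1 v)) (by
    intro a b h
    obtain ⟨σ, hσ⟩ := MulAction.mem_orbit_iff.mp (MulAction.orbitRel_apply.mp h)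
    rcases perm2_enum σ with rfl | rfl
    · rw [one_smul] at hσ; subst hσ; rfl
    · exact orbit_rel_of (Equiv.swap 3 4) (x3 p.1 a) (x3 p.1 b) (show Equiv.swap 3 4 * p3 * (Equiv.swap 3 4)⁻¹ = p3 by decide)
        (by intro i; fin_cases i <;>
          first | rfl | exact congrFun hσ 0 | exact congrFun hσ 1))

private def mk22f : Circle × SymTorus 2 → ExtQuotTorus 5 := fun p =>
  Quotient.liftOn p.2 (fun v => mkQ (x22 p.1 v)) (by
    intro a b h
    obtain ⟨σ, hσ⟩ := MulAction.mem_orbit_iff.mp (MulAction.orbitRel_apply.mp h)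
    rcases perm2_enum σ with rfl | rfl
    · rw [one_smul] at hσ; subst hσ; rfl
    · exact orbit_rel_of (Equiv.swap 0 2 * Equiv.swap 1 3) (x22 p.1 a) (x22 p.1 b) (show (Equiv.swap 0 2 * Equiv.swap 1 3) * p22 * (Equiv.swap 0 2 * Equiv.swap 1 3)⁻¹ = p22 by decide)
        (by intro i; fin_cases i <;>
          first | rfl | exact congrFun hσ 0 | exact congrFun hσ 1))

private def mk2f : Circle × SymTorus 3 → ExtQuotTorus 5 := fun p =>
  Quotient.liftOn p.2 (fun v => mkQ (x2 p.1 v)) (by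
    intro a b h
    obtain ⟨σ, hσ⟩ := MulAction.mem_orbit_iff.mp (MulAction.orbitRel_apply.mp h)
    rcases perm3_enum σ with rfl | rfl | rfl | rfl | rfl | rfl
    · rw [one_smul] at hσ; subst hσ; rfl
    · exact orbit_rel_of (Equiv.swap 2 3) (x2 p.1 a) (x2 p.1 b) (show Equiv.swap 2 3 * p2 * (Equiv.swap 2 3)⁻¹ = p2 by decide)
        (by intro i; fin_cases i <;>
          first | rfl | exact congrFun hσ 0 | exact congrFun hσ 1 | exact congrFun hσ 2)
    · exact orbit_rel_of (Equiv.swap 2 4) (x2 p.1 a) (x2 p.1 b) (show Equiv.swap 2 4 * p2 * (Equiv.swap 2 4)⁻¹ = p2 by decide)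
        (by intro i; fin_cases i <;>
          first | rfl | exact congrFun hσ 0 | exact congrFun hσ 1 | exact congrFun hσ 2)
    · exact orbit_rel_of (Equiv.swap 3 4) (x2 p.1 a) (x2 p.1 b) (show Equiv.swap 3 4 * p2 * (Equiv.swap 3 4)⁻¹ = p2 by decide)
        (by intro i; fin_cases i <;>
          first | rfl | exact congrFun hσ 0 | exact congrFun hσ 1 | exact congrFun hσ 2)
    · exact orbit_rel_of (Equiv.swap 2 3 * Equiv.swap 3 4) (x2 p.1 a) (x2 p.1 b) (show (Equiv.swap 2 3 * Equiv.swap 3 4) * p2 * (Equiv.swap 2 3 * Equiv.swap 3 4)⁻¹ = p2 by decide)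
        (by intro i; fin_cases i <;>
          first | rfl | exact congrFun hσ 0 | exact congrFun hσ 1 | exact congrFun hσ 2)
    · exact orbit_rel_of (Equiv.swap 3 4 * Equiv.swap 2 3) (x2 p.1 a) (x2 p.1 b) (show (Equiv.swap 3 4 * Equiv.swap 2 3) * p2 * (Equiv.swap 3 4 * Equiv.swap 2 3)⁻¹ = p2 by decide)
        (by intro i; fin_cases i <;>
          first | rfl | exact congrFun hσ 0 | exact congrFun hσ 1 | exact congrFun hσ 2))

private def mk1f : SymTorus 5 → ExtQuotTorus 5 :=
  Quotient.lift (fun v => mkQ (x1 v)) (by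
    intro a b h
    obtain ⟨σ, hσ⟩ := MulAction.mem_orbit_iff.mp (MulAction.orbitRel_apply.mp h)
    exact orbit_rel_of σ (x1 a) (x1 b) (by simp [x1])
      (fun i => congrFun hσ i))

private def Phi : (Circle ⊕ (Circle × Circle) ⊕ (Circle × Circle) ⊕
    (Circle × SymTorus 2) ⊕ (Circle × SymTorus 2) ⊕
    (Circle × SymTorus 3) ⊕ SymTorus 5) → ExtQuotTorus 5 :=
  Sum.elim mk5f (Sum.elim mk4f (Sum.elim mk32f (Sum.elim mk3f (Sum.elim mk22f
    (Sum.elim mk2f mk1f)))))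

private instance (r : ℕ) : ContinuousConstSMul (Perm (Fin r)) (Fin r → Circle) :=
  ⟨fun g => by
    show Continuous fun z : Fin r → Circle => fun i => z (g⁻¹ i)
    exact continuous_pi fun i => continuous_apply (g⁻¹ i)⟩

private lemma extFix_closed :
    IsClosed {p : G5 × (Fin 5 → Circle) | p.1 • p.2 = p.2} := by
  have h1 : ∀ γ : G5, IsClosed {z : Fin 5 → Circle | γ • z = z} := by
    intro γ
    have : {z : Fin 5 → Circle | γ • z = z} = ⋂ i, {z | z (γ⁻¹ i) = z i} := by
      ext z
      simp only [Set.mem_iInter, Set.mem_setOf_eq]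
      exact ⟨fun h i => congrFun h i, fun h => funext h⟩
    rw [this]
    exact isClosed_iInter fun i => isClosed_eq (continuous_apply _) (continuous_apply _)
  have : {p : G5 × (Fin 5 → Circle) | p.1 • p.2 = p.2}
      = ⋃ γ : G5, {γ} ×ˢ {z | γ • z = z} := by
    ext p
    simp only [Set.mem_iUnion, Set.mem_prod, Set.mem_singleton_iff, Set.mem_setOf_eq]
    exact ⟨fun h => ⟨p.1, rfl, h⟩, fun ⟨γ, h1, h2⟩ => by rw [h1]; exact h2⟩
  rw [this]
  exact isClosed_iUnion_of_finite fun γ => (isClosed_singleton).prod (h1 γ)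

private instance : CompactSpace (ExtTorus 5) :=
  isCompact_iff_compactSpace.mp extFix_closed.isCompact

private instance : ContinuousConstSMul G5 (ExtTorus 5) :=
  ⟨fun g => by
    have h : Continuous fun x : ExtTorus 5 =>
        ((g * x.1.1 * g⁻¹, fun i => x.1.2 (g⁻¹ i)) : G5 × (Fin 5 → Circle)) := by
      apply Continuous.prodMk
      · exact (continuous_of_discreteTopology (f := fun γ : G5 => g * γ * g⁻¹)).comp (continuous_fst.comp continuous_subtype_val)
      · exact continuous_pi fun i => (continuous_apply (g⁻¹ i)).comp
          (continuous_snd.comp continuous_subtype_val)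
    exact h.subtype_mk fun x : ExtTorus 5 => by
      show (g * x.1.1 * g⁻¹) • ((fun i => x.1.2 (g⁻¹ i) : Fin 5 → Circle)) = _
      have : (fun i => x.1.2 (g⁻¹ i) : Fin 5 → Circle) = g • x.1.2 := rfl
      rw [this, mul_smul, mul_smul, inv_smul_smul, x.2]⟩

private instance : ProperlyDiscontinuousSMul G5 (ExtTorus 5) :=
  ⟨fun _ _ => Set.toFinite _⟩

private instance : T2Space (ExtQuotTorus 5) :=
  t2Space_of_properlyDiscontinuousSMul_of_t2Space

private lemma cont_mkQ : Continuous (mkQ : ExtTorus 5 → ExtQuotTorus 5) := continuous_quot_mk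

private lemma cont_Phi : Continuous Phi := by
  apply Continuous.sumElim
  · exact cont_mkQ.comp (Continuous.subtype_mk (Continuous.prodMk continuous_const
      (continuous_pi fun _ => continuous_id)) _)
  apply Continuous.sumElim
  · apply cont_mkQ.comp
    apply Continuous.subtype_mk
    apply Continuous.prodMk continuous_const
    refine continuous_pi fun i => ?_
    fin_cases i
    · exact continuous_fst
    · exact continuous_fst
    · exact continuous_fst
    · exact continuous_fst
    · exact continuous_snd
  apply Continuous.sumElim
  · apply cont_mkQ.comp
    apply Continuous.subtype_mk
    apply Continuous.prodMk continuous_const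
    refine continuous_pi fun i => ?_
    fin_cases i
    · exact continuous_fst
    · exact continuous_fst
    · exact continuous_fst
    · exact continuous_snd
    · exact continuous_snd
  apply Continuous.sumElim
  · have hq : Topology.IsQuotientMap (Prod.map (id : Circle → Circle)
        (Quotient.mk (MulAction.orbitRel (Perm (Fin 2)) (Fin 2 → Circle)))) :=
      (IsOpenQuotientMap.id.prodMap MulAction.isOpenQuotientMap_quotientMk).isQuotientMap
    rw [hq.continuous_iff]
    show Continuous fun q : Circle × (Fin 2 → Circle) => mkQ (x3 q.1 q.2)
    apply cont_mkQ.comp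
    apply Continuous.subtype_mk
    apply Continuous.prodMk continuous_const
    refine continuous_pi fun i => ?_
    fin_cases i
    · exact continuous_fst
    · exact continuous_fst
    · exact continuous_fst
    · exact (continuous_apply (0 : Fin 2)).comp continuous_snd
    · exact (continuous_apply (1 : Fin 2)).comp continuous_snd
  apply Continuous.sumElim
  · have hq : Topology.IsQuotientMap (Prod.map (id : Circle → Circle)
        (Quotient.mk (MulAction.orbitRel (Perm (Fin 2)) (Fin 2 → Circle)))) :=
      (IsOpenQuotientMap.id.prodMap MulAction.isOpenQuotientMap_quotientMk).isQuotientMap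
    rw [hq.continuous_iff]
    show Continuous fun q : Circle × (Fin 2 → Circle) => mkQ (x22 q.1 q.2)
    apply cont_mkQ.comp
    apply Continuous.subtype_mk
    apply Continuous.prodMk continuous_const
    refine continuous_pi fun i => ?_
    fin_cases i
    · exact (continuous_apply (0 : Fin 2)).comp continuous_snd
    · exact (continuous_apply (0 : Fin 2)).comp continuous_snd
    · exact (continuous_apply (1 : Fin 2)).comp continuous_snd
    · exact (continuous_apply (1 : Fin 2)).comp continuous_snd
    · exact continuous_fst
  apply Continuous.sumElim
  · have hq : Topology.IsQuotientMap (Prod.map (id : Circle → Circle)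
        (Quotient.mk (MulAction.orbitRel (Perm (Fin 3)) (Fin 3 → Circle)))) :=
      (IsOpenQuotientMap.id.prodMap MulAction.isOpenQuotientMap_quotientMk).isQuotientMap
    rw [hq.continuous_iff]
    show Continuous fun q : Circle × (Fin 3 → Circle) => mkQ (x2 q.1 q.2)
    apply cont_mkQ.comp
    apply Continuous.subtype_mk
    apply Continuous.prodMk continuous_const
    refine continuous_pi fun i => ?_
    fin_cases i
    · exact continuous_fst
    · exact continuous_fst
    · exact (continuous_apply (0 : Fin 3)).comp continuous_snd
    · exact (continuous_apply (1 : Fin 3)).comp continuous_snd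
    · exact (continuous_apply (2 : Fin 3)).comp continuous_snd
  · exact (cont_mkQ.comp (Continuous.subtype_mk (Continuous.prodMk continuous_const
      continuous_id) _)).quotient_lift _

private lemma reduce_case {γ : G5} {z : Fin 5 → Circle} (hz : γ • z = z) (g : G5) (p : G5)
    (hγ : γ = g * p * g⁻¹) :
    ∃ hfix : p • (fun i => z (g i)) = (fun i => z (g i)),
      mkQ ⟨(γ, z), hz⟩ = mkQ ⟨(p, fun i => z (g i)), hfix⟩ := by
  have key : ∀ j, z (g (p⁻¹ j)) = z (g j) := by
    intro j
    have hz' : z (γ⁻¹ (g j)) = z (g j) := congrFun hz (g j)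
    have harg : γ⁻¹ (g j) = g (p⁻¹ j) := by
      rw [hγ]; simp [mul_inv_rev, Equiv.Perm.mul_apply]
    rw [harg] at hz'; exact hz'
  refine ⟨funext key, (quot_eq_iff _ _).mpr ⟨g, Subtype.ext (Prod.ext ?_ ?_)⟩⟩
  · show g * p * g⁻¹ = γ; exact hγ.symm
  · show (fun j => z (g (g⁻¹ j))) = z
    funext j
    rw [show g (g⁻¹ j) = j from Equiv.apply_symm_apply g j]

private lemma surj_case5 (z : Fin 5 → Circle) (hfix : p5 • z = z) :
    ∃ t, Phi t = mkQ ⟨(p5, z), hfix⟩ := by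
  have key : ∀ j, z (p5⁻¹ j) = z j := fun j => congrFun hfix j
  have e1 : z 0 = z 1 := by have := key 1; rwa [show p5⁻¹ (1 : Fin 5) = 0 by decide] at this
  have e2 : z 1 = z 2 := by have := key 2; rwa [show p5⁻¹ (2 : Fin 5) = 1 by decide] at this
  have e3 : z 2 = z 3 := by have := key 3; rwa [show p5⁻¹ (3 : Fin 5) = 2 by decide] at this
  have e4 : z 3 = z 4 := by have := key 4; rwa [show p5⁻¹ (4 : Fin 5) = 3 by decide] at this
  refine ⟨Sum.inl (z 0), ?_⟩
  show mkQ (x5 (z 0)) = _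
  have hv : w5v (z 0) = z := by
    funext j; fin_cases j
    exacts [rfl, e1, e1.trans e2, e1.trans (e2.trans e3), e1.trans (e2.trans (e3.trans e4))]
  have : x5 (z 0) = ⟨(p5, z), hfix⟩ := Subtype.ext (Prod.ext rfl hv)
  rw [this]

private lemma surj_case4 (z : Fin 5 → Circle) (hfix : p4 • z = z) :
    ∃ t, Phi t = mkQ ⟨(p4, z), hfix⟩ := by
  have key : ∀ j, z (p4⁻¹ j) = z j := fun j => congrFun hfix j
  have e1 : z 0 = z 1 := by have := key 1; rwa [show p4⁻¹ (1 : Fin 5) = 0 by decide] at this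
  have e2 : z 1 = z 2 := by have := key 2; rwa [show p4⁻¹ (2 : Fin 5) = 1 by decide] at this
  have e3 : z 2 = z 3 := by have := key 3; rwa [show p4⁻¹ (3 : Fin 5) = 2 by decide] at this
  refine ⟨Sum.inr (Sum.inl (z 0, z 4)), ?_⟩
  show mkQ (x4 (z 0) (z 4)) = _
  have hv : w4v (z 0) (z 4) = z := by
    funext j; fin_cases j
    exacts [rfl, e1, e1.trans e2, e1.trans (e2.trans e3), rfl]
  have : x4 (z 0) (z 4) = ⟨(p4, z), hfix⟩ := Subtype.ext (Prod.ext rfl hv)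
  rw [this]

private lemma surj_case32 (z : Fin 5 → Circle) (hfix : p32 • z = z) :
    ∃ t, Phi t = mkQ ⟨(p32, z), hfix⟩ := by
  have key : ∀ j, z (p32⁻¹ j) = z j := fun j => congrFun hfix j
  have e1 : z 0 = z 1 := by have := key 1; rwa [show p32⁻¹ (1 : Fin 5) = 0 by decide] at this
  have e2 : z 1 = z 2 := by have := key 2; rwa [show p32⁻¹ (2 : Fin 5) = 1 by decide] at this
  have e4 : z 3 = z 4 := by have := key 4; rwa [show p32⁻¹ (4 : Fin 5) = 3 by decide] at this
  refine ⟨Sum.inr (Sum.inr (Sum.inl (z 0, z 3))), ?_⟩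
  show mkQ (x32 (z 0) (z 3)) = _
  have hv : w32v (z 0) (z 3) = z := by
    funext j; fin_cases j
    exacts [rfl, e1, e1.trans e2, rfl, e4]
  have : x32 (z 0) (z 3) = ⟨(p32, z), hfix⟩ := Subtype.ext (Prod.ext rfl hv)
  rw [this]

private lemma surj_case3 (z : Fin 5 → Circle) (hfix : p3 • z = z) :
    ∃ t, Phi t = mkQ ⟨(p3, z), hfix⟩ := by
  have key : ∀ j, z (p3⁻¹ j) = z j := fun j => congrFun hfix j
  have e1 : z 0 = z 1 := by have := key 1; rwa [show p3⁻¹ (1 : Fin 5) = 0 by decide] at this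
  have e2 : z 1 = z 2 := by have := key 2; rwa [show p3⁻¹ (2 : Fin 5) = 1 by decide] at this
  refine ⟨Sum.inr (Sum.inr (Sum.inr (Sum.inl (z 0, Quotient.mk _ ![z 3, z 4])))), ?_⟩
  show mkQ (x3 (z 0) ![z 3, z 4]) = _
  have hv : w3v (z 0) ![z 3, z 4] = z := by
    funext j; fin_cases j
    exacts [rfl, e1, e1.trans e2, rfl, rfl]
  have : x3 (z 0) ![z 3, z 4] = ⟨(p3, z), hfix⟩ := Subtype.ext (Prod.ext rfl hv)
  rw [this]

private lemma surj_case22 (z : Fin 5 → Circle) (hfix : p22 • z = z) :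
    ∃ t, Phi t = mkQ ⟨(p22, z), hfix⟩ := by
  have key : ∀ j, z (p22⁻¹ j) = z j := fun j => congrFun hfix j
  have e1 : z 0 = z 1 := by have := key 1; rwa [show p22⁻¹ (1 : Fin 5) = 0 by decide] at this
  have e3 : z 2 = z 3 := by have := key 3; rwa [show p22⁻¹ (3 : Fin 5) = 2 by decide] at this
  refine ⟨Sum.inr (Sum.inr (Sum.inr (Sum.inr (Sum.inl (z 4, Quotient.mk _ ![z 0, z 2]))))), ?_⟩
  show mkQ (x22 (z 4) ![z 0, z 2]) = _
  have hv : w22v (z 4) ![z 0, z 2] = z := by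
    funext j; fin_cases j
    exacts [rfl, e1, rfl, e3, rfl]
  have : x22 (z 4) ![z 0, z 2] = ⟨(p22, z), hfix⟩ := Subtype.ext (Prod.ext rfl hv)
  rw [this]

private lemma surj_case2 (z : Fin 5 → Circle) (hfix : p2 • z = z) :
    ∃ t, Phi t = mkQ ⟨(p2, z), hfix⟩ := by
  have key : ∀ j, z (p2⁻¹ j) = z j := fun j => congrFun hfix j
  have e1 : z 0 = z 1 := by have := key 1; rwa [show p2⁻¹ (1 : Fin 5) = 0 by decide] at this
  refine ⟨Sum.inr (Sum.inr (Sum.inr (Sum.inr (Sum.inr (Sum.inl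
    (z 0, Quotient.mk _ ![z 2, z 3, z 4])))))), ?_⟩
  show mkQ (x2 (z 0) ![z 2, z 3, z 4]) = _
  have hv : w2v (z 0) ![z 2, z 3, z 4] = z := by
    funext j; fin_cases j
    exacts [rfl, e1, rfl, rfl, rfl]
  have : x2 (z 0) ![z 2, z 3, z 4] = ⟨(p2, z), hfix⟩ := Subtype.ext (Prod.ext rfl hv)
  rw [this]

private lemma classify' : ∀ γ : G5, ∃ g : G5,
    γ = g * 1 * g⁻¹ ∨ γ = g * p2 * g⁻¹ ∨ γ = g * p22 * g⁻¹ ∨ γ = g * p3 * g⁻¹ ∨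
    γ = g * p32 * g⁻¹ ∨ γ = g * p4 * g⁻¹ ∨ γ = g * p5 * g⁻¹ := by decide

private lemma Phi_surj : Function.Surjective Phi := by
  intro q
  induction q using Quotient.ind with
  | _ x =>
    obtain ⟨⟨γ, z⟩, hz⟩ := x
    obtain ⟨g, hc⟩ := classify' γ
    rcases hc with hγ | hγ | hγ | hγ | hγ | hγ | hγ
    · have h1 : γ = 1 := by rw [hγ]; group
      subst h1
      exact ⟨Sum.inr (Sum.inr (Sum.inr (Sum.inr (Sum.inr (Sum.inr (Quotient.mk _ z)))))), rfl⟩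
    · obtain ⟨hfix, heq⟩ := reduce_case hz g p2 hγ
      obtain ⟨t, ht⟩ := surj_case2 _ hfix
      exact ⟨t, ht.trans heq.symm⟩
    · obtain ⟨hfix, heq⟩ := reduce_case hz g p22 hγ
      obtain ⟨t, ht⟩ := surj_case22 _ hfix
      exact ⟨t, ht.trans heq.symm⟩
    · obtain ⟨hfix, heq⟩ := reduce_case hz g p3 hγ
      obtain ⟨t, ht⟩ := surj_case3 _ hfix
      exact ⟨t, ht.trans heq.symm⟩
    · obtain ⟨hfix, heq⟩ := reduce_case hz g p32 hγ
      obtain ⟨t, ht⟩ := surj_case32 _ hfix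
      exact ⟨t, ht.trans heq.symm⟩
    · obtain ⟨hfix, heq⟩ := reduce_case hz g p4 hγ
      obtain ⟨t, ht⟩ := surj_case4 _ hfix
      exact ⟨t, ht.trans heq.symm⟩
    · obtain ⟨hfix, heq⟩ := reduce_case hz g p5 hγ
      obtain ⟨t, ht⟩ := surj_case5 _ hfix
      exact ⟨t, ht.trans heq.symm⟩

private lemma inv_conj {g a : G5} (h : g * a * g⁻¹ = a) : g⁻¹ * a * (g⁻¹)⁻¹ = a := by
  rw [inv_inv]
  calc g⁻¹ * a * g = g⁻¹ * (g * a * g⁻¹) * g := by rw [h]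
    _ = a := by group

private lemma sym_eq {r : ℕ} (v v' : Fin r → Circle) (σ : Perm (Fin r)) (h : σ • v' = v) :
    Quotient.mk (MulAction.orbitRel (Perm (Fin r)) (Fin r → Circle)) v = Quotient.mk _ v' :=
  (symquot_eq_iff v v').mpr ⟨σ, h⟩

private lemma orbit_data {x y : ExtTorus 5} (h : mkQ x = mkQ y) :
    ∃ g : G5, (g * y.1.1 * g⁻¹ = x.1.1) ∧ ∀ i, y.1.2 (g⁻¹ i) = x.1.2 i := by
  obtain ⟨g, hg⟩ := (quot_eq_iff x y).mp h
  exact ⟨g, congrArg (fun t => t.1.1) hg, fun i => congrArg (fun t => t.1.2 i) hg⟩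

private def Reps : Fin 7 → G5 := ![1, p2, p22, p3, p32, p4, p5]

private lemma conj_index : ∀ (g : G5) (i j : Fin 7), g * Reps i * g⁻¹ = Reps j → i = j := by
  decide

private lemma cent4 : ∀ g : G5, g * p4 * g⁻¹ = p4 →
    g 4 = 4 ∧ (g 0 = 0 ∨ g 0 = 1 ∨ g 0 = 2 ∨ g 0 = 3) := by decide

private lemma cent32 : ∀ g : G5, g * p32 * g⁻¹ = p32 →
    (g 0 = 0 ∨ g 0 = 1 ∨ g 0 = 2) ∧ (g 3 = 3 ∨ g 3 = 4) := by decide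

private lemma cent3 : ∀ g : G5, g * p3 * g⁻¹ = p3 →
    (g 0 = 0 ∨ g 0 = 1 ∨ g 0 = 2) ∧ ((g 3 = 3 ∧ g 4 = 4) ∨ (g 3 = 4 ∧ g 4 = 3)) := by decide

private lemma cent22 : ∀ g : G5, g * p22 * g⁻¹ = p22 →
    g 4 = 4 ∧ (((g 0 = 0 ∨ g 0 = 1) ∧ (g 2 = 2 ∨ g 2 = 3)) ∨
      ((g 0 = 2 ∨ g 0 = 3) ∧ (g 2 = 0 ∨ g 2 = 1))) := by decide

private lemma cent2 : ∀ g : G5, g * p2 * g⁻¹ = p2 →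
    (g 0 = 0 ∨ g 0 = 1) ∧
    ((g 2 = 2 ∧ g 3 = 3 ∧ g 4 = 4) ∨ (g 2 = 2 ∧ g 3 = 4 ∧ g 4 = 3) ∨
     (g 2 = 3 ∧ g 3 = 2 ∧ g 4 = 4) ∨ (g 2 = 4 ∧ g 3 = 3 ∧ g 4 = 2) ∨
     (g 2 = 3 ∧ g 3 = 4 ∧ g 4 = 2) ∨ (g 2 = 4 ∧ g 3 = 2 ∧ g 4 = 3)) := by decide

private lemma Phi_inj : Function.Injective Phi := by
  intro s t h
  rcases s with c | ⟨c, d⟩ | ⟨c, d⟩ | ⟨c, q⟩ | ⟨c, q⟩ | ⟨c, q⟩ | q <;>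
    rcases t with c' | ⟨c', d'⟩ | ⟨c', d'⟩ | ⟨c', q'⟩ | ⟨c', q'⟩ | ⟨c', q'⟩ | q' <;>
    try obtain ⟨v⟩ := q
  all_goals try obtain ⟨v'⟩ := q'
  · -- 5/5
    obtain ⟨g, hg1, hg2⟩ := orbit_data h
    exact congrArg Sum.inl (hg2 0).symm
  · -- 5 vs 4 : cross
    obtain ⟨g, hg1, hg2⟩ := orbit_data h
    exact absurd (conj_index g 5 6 hg1) (by decide)
  · -- 5 vs 32 : cross
    obtain ⟨g, hg1, hg2⟩ := orbit_data h
    exact absurd (conj_index g 4 6 hg1) (by decide)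
  · -- 5 vs 3 : cross
    obtain ⟨g, hg1, hg2⟩ := orbit_data h
    exact absurd (conj_index g 3 6 hg1) (by decide)
  · -- 5 vs 22 : cross
    obtain ⟨g, hg1, hg2⟩ := orbit_data h
    exact absurd (conj_index g 2 6 hg1) (by decide)
  · -- 5 vs 2 : cross
    obtain ⟨g, hg1, hg2⟩ := orbit_data h
    exact absurd (conj_index g 1 6 hg1) (by decide)
  · -- 5 vs 1 : cross
    obtain ⟨g, hg1, hg2⟩ := orbit_data h
    exact absurd (conj_index g 0 6 hg1) (by decide)
  · -- 4 vs 5 : cross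
    obtain ⟨g, hg1, hg2⟩ := orbit_data h
    exact absurd (conj_index g 6 5 hg1) (by decide)
  · -- 4/4
    obtain ⟨g, hg1, hg2⟩ := orbit_data h
    obtain ⟨h4, h0⟩ := cent4 g⁻¹ (inv_conj hg1)
    have hd : w4v c' d' (g⁻¹ 4) = w4v c d 4 := hg2 4
    rw [h4] at hd
    have hc : w4v c' d' (g⁻¹ 0) = w4v c d 0 := hg2 0
    have hc' : c = c' := by rcases h0 with hh | hh | hh | hh <;> rw [hh] at hc <;> exact hc.symm
    exact congrArg (fun z => Sum.inr (Sum.inl z)) (Prod.ext hc' hd.symm)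
  · -- 4 vs 32 : cross
    obtain ⟨g, hg1, hg2⟩ := orbit_data h
    exact absurd (conj_index g 4 5 hg1) (by decide)
  · -- 4 vs 3 : cross
    obtain ⟨g, hg1, hg2⟩ := orbit_data h
    exact absurd (conj_index g 3 5 hg1) (by decide)
  · -- 4 vs 22 : cross
    obtain ⟨g, hg1, hg2⟩ := orbit_data h
    exact absurd (conj_index g 2 5 hg1) (by decide)
  · -- 4 vs 2 : cross
    obtain ⟨g, hg1, hg2⟩ := orbit_data h
    exact absurd (conj_index g 1 5 hg1) (by decide)
  · -- 4 vs 1 : cross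
    obtain ⟨g, hg1, hg2⟩ := orbit_data h
    exact absurd (conj_index g 0 5 hg1) (by decide)
  · -- 32 vs 5 : cross
    obtain ⟨g, hg1, hg2⟩ := orbit_data h
    exact absurd (conj_index g 6 4 hg1) (by decide)
  · -- 32 vs 4 : cross
    obtain ⟨g, hg1, hg2⟩ := orbit_data h
    exact absurd (conj_index g 5 4 hg1) (by decide)
  · -- 32/32
    obtain ⟨g, hg1, hg2⟩ := orbit_data h
    obtain ⟨h0, h3⟩ := cent32 g⁻¹ (inv_conj hg1)
    have hc : w32v c' d' (g⁻¹ 0) = w32v c d 0 := hg2 0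
    have hd : w32v c' d' (g⁻¹ 3) = w32v c d 3 := hg2 3
    have hc' : c = c' := by rcases h0 with hh | hh | hh <;> rw [hh] at hc <;> exact hc.symm
    have hd' : d = d' := by rcases h3 with hh | hh <;> rw [hh] at hd <;> exact hd.symm
    exact congrArg (fun z => Sum.inr (Sum.inr (Sum.inl z))) (Prod.ext hc' hd')
  · -- 32 vs 3 : cross
    obtain ⟨g, hg1, hg2⟩ := orbit_data h
    exact absurd (conj_index g 3 4 hg1) (by decide)
  · -- 32 vs 22 : cross
    obtain ⟨g, hg1, hg2⟩ := orbit_data h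
    exact absurd (conj_index g 2 4 hg1) (by decide)
  · -- 32 vs 2 : cross
    obtain ⟨g, hg1, hg2⟩ := orbit_data h
    exact absurd (conj_index g 1 4 hg1) (by decide)
  · -- 32 vs 1 : cross
    obtain ⟨g, hg1, hg2⟩ := orbit_data h
    exact absurd (conj_index g 0 4 hg1) (by decide)
  · -- 3 vs 5 : cross
    obtain ⟨g, hg1, hg2⟩ := orbit_data h
    exact absurd (conj_index g 6 3 hg1) (by decide)
  · -- 3 vs 4 : cross
    obtain ⟨g, hg1, hg2⟩ := orbit_data h
    exact absurd (conj_index g 5 3 hg1) (by decide)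
  · -- 3 vs 32 : cross
    obtain ⟨g, hg1, hg2⟩ := orbit_data h
    exact absurd (conj_index g 4 3 hg1) (by decide)
  · -- 3/3
    obtain ⟨g, hg1, hg2⟩ := orbit_data h
    obtain ⟨h0, h34⟩ := cent3 g⁻¹ (inv_conj hg1)
    have hc : w3v c' v' (g⁻¹ 0) = w3v c v 0 := hg2 0
    have hc' : c = c' := by rcases h0 with hh | hh | hh <;> rw [hh] at hc <;> exact hc.symm
    have e3 : w3v c' v' (g⁻¹ 3) = w3v c v 3 := hg2 3
    have e4 : w3v c' v' (g⁻¹ 4) = w3v c v 4 := hg2 4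
    have hq : Quotient.mk (MulAction.orbitRel (Perm (Fin 2)) (Fin 2 → Circle)) v
        = Quotient.mk _ v' := by
      rcases h34 with ⟨h3, h4⟩ | ⟨h3, h4⟩ <;> rw [h3] at e3 <;> rw [h4] at e4
      · exact sym_eq v v' 1 (funext fun i => by fin_cases i; exacts [e3, e4])
      · exact sym_eq v v' (Equiv.swap 0 1) (funext fun i => by fin_cases i; exacts [e3, e4])
    exact congrArg (fun z => Sum.inr (Sum.inr (Sum.inr (Sum.inl z)))) (Prod.ext hc' hq)
  · -- 3 vs 22 : cross
    obtain ⟨g, hg1, hg2⟩ := orbit_data h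
    exact absurd (conj_index g 2 3 hg1) (by decide)
  · -- 3 vs 2 : cross
    obtain ⟨g, hg1, hg2⟩ := orbit_data h
    exact absurd (conj_index g 1 3 hg1) (by decide)
  · -- 3 vs 1 : cross
    obtain ⟨g, hg1, hg2⟩ := orbit_data h
    exact absurd (conj_index g 0 3 hg1) (by decide)
  · -- 22 vs 5 : cross
    obtain ⟨g, hg1, hg2⟩ := orbit_data h
    exact absurd (conj_index g 6 2 hg1) (by decide)
  · -- 22 vs 4 : cross
    obtain ⟨g, hg1, hg2⟩ := orbit_data h
    exact absurd (conj_index g 5 2 hg1) (by decide)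
  · -- 22 vs 32 : cross
    obtain ⟨g, hg1, hg2⟩ := orbit_data h
    exact absurd (conj_index g 4 2 hg1) (by decide)
  · -- 22 vs 3 : cross
    obtain ⟨g, hg1, hg2⟩ := orbit_data h
    exact absurd (conj_index g 3 2 hg1) (by decide)
  · -- 22/22
    obtain ⟨g, hg1, hg2⟩ := orbit_data h
    obtain ⟨h4, h02⟩ := cent22 g⁻¹ (inv_conj hg1)
    have hc : w22v c' v' (g⁻¹ 4) = w22v c v 4 := hg2 4
    rw [h4] at hc
    have e0 : w22v c' v' (g⁻¹ 0) = w22v c v 0 := hg2 0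
    have e2 : w22v c' v' (g⁻¹ 2) = w22v c v 2 := hg2 2
    have hq : Quotient.mk (MulAction.orbitRel (Perm (Fin 2)) (Fin 2 → Circle)) v
        = Quotient.mk _ v' := by
      rcases h02 with ⟨h0, h2⟩ | ⟨h0, h2⟩
      · rcases h0 with hh | hh <;> rw [hh] at e0 <;> rcases h2 with hh' | hh' <;> rw [hh'] at e2 <;>
          exact sym_eq v v' 1 (funext fun i => by fin_cases i; exacts [e0, e2])
      · rcases h0 with hh | hh <;> rw [hh] at e0 <;> rcases h2 with hh' | hh' <;> rw [hh'] at e2 <;>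
          exact sym_eq v v' (Equiv.swap 0 1) (funext fun i => by fin_cases i; exacts [e0, e2])
    exact congrArg (fun z => Sum.inr (Sum.inr (Sum.inr (Sum.inr (Sum.inl z))))) (Prod.ext hc.symm hq)
  · -- 22 vs 2 : cross
    obtain ⟨g, hg1, hg2⟩ := orbit_data h
    exact absurd (conj_index g 1 2 hg1) (by decide)
  · -- 22 vs 1 : cross
    obtain ⟨g, hg1, hg2⟩ := orbit_data h
    exact absurd (conj_index g 0 2 hg1) (by decide)
  · -- 2 vs 5 : cross
    obtain ⟨g, hg1, hg2⟩ := orbit_data h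
    exact absurd (conj_index g 6 1 hg1) (by decide)
  · -- 2 vs 4 : cross
    obtain ⟨g, hg1, hg2⟩ := orbit_data h
    exact absurd (conj_index g 5 1 hg1) (by decide)
  · -- 2 vs 32 : cross
    obtain ⟨g, hg1, hg2⟩ := orbit_data h
    exact absurd (conj_index g 4 1 hg1) (by decide)
  · -- 2 vs 3 : cross
    obtain ⟨g, hg1, hg2⟩ := orbit_data h
    exact absurd (conj_index g 3 1 hg1) (by decide)
  · -- 2 vs 22 : cross
    obtain ⟨g, hg1, hg2⟩ := orbit_data h
    exact absurd (conj_index g 2 1 hg1) (by decide)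
  · -- 2/2
    obtain ⟨g, hg1, hg2⟩ := orbit_data h
    obtain ⟨h0, h234⟩ := cent2 g⁻¹ (inv_conj hg1)
    have hc : w2v c' v' (g⁻¹ 0) = w2v c v 0 := hg2 0
    have hc' : c = c' := by rcases h0 with hh | hh <;> rw [hh] at hc <;> exact hc.symm
    have e2 : w2v c' v' (g⁻¹ 2) = w2v c v 2 := hg2 2
    have e3 : w2v c' v' (g⁻¹ 3) = w2v c v 3 := hg2 3
    have e4 : w2v c' v' (g⁻¹ 4) = w2v c v 4 := hg2 4
    have hq : Quotient.mk (MulAction.orbitRel (Perm (Fin 3)) (Fin 3 → Circle)) v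
        = Quotient.mk _ v' := by
      rcases h234 with ⟨ha, hb, hcc⟩ | ⟨ha, hb, hcc⟩ | ⟨ha, hb, hcc⟩ | ⟨ha, hb, hcc⟩ |
        ⟨ha, hb, hcc⟩ | ⟨ha, hb, hcc⟩ <;> rw [ha] at e2 <;> rw [hb] at e3 <;> rw [hcc] at e4
      · exact sym_eq v v' 1 (funext fun i => by fin_cases i; exacts [e2, e3, e4])
      · exact sym_eq v v' (Equiv.swap 1 2) (funext fun i => by fin_cases i; exacts [e2, e3, e4])
      · exact sym_eq v v' (Equiv.swap 0 1) (funext fun i => by fin_cases i; exacts [e2, e3, e4])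
      · exact sym_eq v v' (Equiv.swap 0 2) (funext fun i => by fin_cases i; exacts [e2, e3, e4])
      · exact sym_eq v v' (Equiv.swap 1 2 * Equiv.swap 0 1)
          (funext fun i => by fin_cases i; exacts [e2, e3, e4])
      · exact sym_eq v v' (Equiv.swap 0 1 * Equiv.swap 1 2)
          (funext fun i => by fin_cases i; exacts [e2, e3, e4])
    exact congrArg (fun z => Sum.inr (Sum.inr (Sum.inr (Sum.inr (Sum.inr (Sum.inl z))))))
      (Prod.ext hc' hq)
  · -- 2 vs 1 : cross
    obtain ⟨g, hg1, hg2⟩ := orbit_data h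
    exact absurd (conj_index g 0 1 hg1) (by decide)
  · -- 1 vs 5 : cross
    obtain ⟨g, hg1, hg2⟩ := orbit_data h
    exact absurd (conj_index g 6 0 hg1) (by decide)
  · -- 1 vs 4 : cross
    obtain ⟨g, hg1, hg2⟩ := orbit_data h
    exact absurd (conj_index g 5 0 hg1) (by decide)
  · -- 1 vs 32 : cross
    obtain ⟨g, hg1, hg2⟩ := orbit_data h
    exact absurd (conj_index g 4 0 hg1) (by decide)
  · -- 1 vs 3 : cross
    obtain ⟨g, hg1, hg2⟩ := orbit_data h
    exact absurd (conj_index g 3 0 hg1) (by decide)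
  · -- 1 vs 22 : cross
    obtain ⟨g, hg1, hg2⟩ := orbit_data h
    exact absurd (conj_index g 2 0 hg1) (by decide)
  · -- 1 vs 2 : cross
    obtain ⟨g, hg1, hg2⟩ := orbit_data h
    exact absurd (conj_index g 1 0 hg1) (by decide)
  · -- 1/1
    obtain ⟨g, hg1, hg2⟩ := orbit_data h
    exact congrArg (fun z => Sum.inr (Sum.inr (Sum.inr (Sum.inr (Sum.inr (Sum.inr z))))))
      (sym_eq v v' g (funext fun i => hg2 i))

/-- the extended quotient `𝕋̂⁵/S_5` is homeomorphic to the disjoint union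
`𝕋 ⊔ 𝕋² ⊔ 𝕋² ⊔ (𝕋 × Sym²𝕋) ⊔ (𝕋 × Sym²𝕋) ⊔ (𝕋 × Sym³𝕋) ⊔ Sym⁵𝕋`,
one component for each of the seven partitions of `5`. -/
theorem extended_quotient_torus_five :
    Nonempty (ExtQuotTorus 5 ≃ₜ
      (Circle ⊕ (Circle × Circle) ⊕ (Circle × Circle) ⊕
        (Circle × SymTorus 2) ⊕ (Circle × SymTorus 2) ⊕
        (Circle × SymTorus 3) ⊕ SymTorus 5)) := by
  have hbij : Function.Bijective Phi := ⟨Phi_inj, Phi_surj⟩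
  exact ⟨(Continuous.homeoOfEquivCompactToT2 (f := Equiv.ofBijective Phi hbij) cont_Phi).symm⟩
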